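/- Let G be a reductive group acting on a scheme X with a fixed maximal torus T, and suppose the Hilbert–Mumford criterion holds: x is semistable for a linearization L with respect to a subgroup H if and only if μ^L(x,λ) ≥ 0 for all nontrivial one-parameter subgroups λ of H. Then the G-semistable locus satisfies X^{ss}_G(L) = ∩_{g∈G} g⁻¹ · X^{ss}_T(L). Consequently, if only finitely many subsets of X can occur as X^{ss}_T(L') as L' ranges over G-linearized ample line bundles, then only finitely many subsets can occur as X^{ss}_G(L'). -/
import Mathlib

/- STATEMENT 9: abstract relative Hilbert–Mumford setting.  `Λ` is the set of
1-PS's of `G` with conjugation action, `T` the subset of 1-PS's of a maximal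
torus into which every nontrivial 1-PS can be conjugated, and `μ i` the HM weight
for the linearization indexed by `i`.  Given the HM criterion for `G`- and
`T`-semistability, `X^{ss}_G(L) = ⋂_{g∈G} g⁻¹ · X^{ss}_T(L)`; consequently, if
only finitely many subsets occur as `T`-semistable loci, the same holds for
`G`-semistable loci. -/
theorem stmt9 {G X Λ ι : Type*} [Group G] [MulAction G X] [MulAction G Λ]
    (zero : Λ) (hzero : ∀ g : G, g • zero = zero)
    (T : Set Λ) (hT : ∀ l : Λ, l ≠ zero → ∃ g : G, g • l ∈ T)
    (μ : ι → X → Λ → EReal)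
    (hequiv : ∀ (i : ι) (x : X) (g : G) (l : Λ), μ i (g • x) (g • l) = μ i x l)
    (SSG SST : ι → Set X)
    (hHMG : ∀ i x, x ∈ SSG i ↔ ∀ l : Λ, l ≠ zero → 0 ≤ μ i x l)
    (hHMT : ∀ i x, x ∈ SST i ↔ ∀ l ∈ T, l ≠ zero → 0 ≤ μ i x l) :
    (∀ i, SSG i = ⋂ g : G, (fun x => g • x) ⁻¹' SST i) ∧
    ((Set.range SST).Finite → (Set.range SSG).Finite) := by
  have key : ∀ i, SSG i = ⋂ g : G, (fun x => g • x) ⁻¹' SST i := by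
    intro i
    ext x
    simp only [Set.mem_iInter, Set.mem_preimage, hHMG, hHMT]
    constructor
    · intro h g l hl hlz
      have hne : g⁻¹ • l ≠ zero := by
        intro he
        apply hlz
        calc l = g • g⁻¹ • l := by simp
        _ = zero := by rw [he]; exact hzero g
      have := h (g⁻¹ • l) hne
      rwa [← hequiv i x g (g⁻¹ • l), smul_inv_smul] at this
    · intro h l hlz
      obtain ⟨g, hg⟩ := hT l hlz
      have hne : g • l ≠ zero := by
        intro he
        apply hlz
        calc l = g⁻¹ • g • l := by simp
        _ = zero := by rw [he]; exact hzero g⁻¹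
      have := h g (g • l) hg hne
      rwa [hequiv i x g l] at this
  refine ⟨key, fun hfin => ?_⟩
  have : Set.range SSG ⊆ (fun S : Set X => ⋂ g : G, (fun x => g • x) ⁻¹' S) '' Set.range SST := by
    rintro _ ⟨i, rfl⟩
    exact ⟨SST i, ⟨i, rfl⟩, (key i).symm⟩
  exact Set.Finite.subset (hfin.image _) this
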